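/- Let a, b ∈ F_q^* and (u,v) ∈ F_q² with (u,v) ≠ (0,0). Then the Hamming weight of the codeword c_{(u,v)} of C_{D_{(a,b)}} is (1/4)·q² if v ≠ b (including the case v = 0), and is (1/4)·q·(q − 1 − S(a,u)) if v = b. -/

import Mathlib

open scoped BigOperators

noncomputable section

namespace Paper

/-- The additive character value `(-1)^{Tr(x)}` as an integer, where `Tr` is the
trace from `F` to `F_2`. -/
def chi {F : Type*} [Field F] [Fintype F] [Algebra (ZMod 2) F] (x : F) : ℤ :=
  if Algebra.trace (ZMod 2) F x = 0 then 1 else -1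

/-- The exponential sum `S(a,b) = Σ_{x ∈ F_q^*} (-1)^{Tr(a x^{(q-1)/l^m} + b x)}`. -/
def Sab (l m : ℕ) {F : Type*} [Field F] [Fintype F] [Algebra (ZMod 2) F] (a b : F) : ℤ :=
  letI : Fintype Fˣ := Fintype.ofFinite Fˣ
  ∑ x : Fˣ, chi (a * (x : F) ^ ((Fintype.card F - 1) / l ^ m) + b * (x : F))

/-- The exponential sum `S(a) = Σ_{i=0}^{l^m-1} (-1)^{Tr(a α^i)}`. -/
def Sa (l m : ℕ) {F : Type*} [Field F] [Fintype F] [Algebra (ZMod 2) F] (α a : F) : ℤ :=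
  ∑ i ∈ Finset.range (l ^ m), chi (a * α ^ i)

/-- The defining set `D_{(a,b)} = {(x,y) ≠ (0,0) : Tr(a x^{(q-1)/l^m} + b y) = 0}`. -/
def Dset (l m : ℕ) {F : Type*} [Field F] [Fintype F] [Algebra (ZMod 2) F] (a b : F) :
    Set (F × F) :=
  {p | p ≠ 0 ∧
    Algebra.trace (ZMod 2) F (a * p.1 ^ ((Fintype.card F - 1) / l ^ m) + b * p.2) = 0}

/-- The `F_2`-linear map sending `(u,v) ∈ F_q²` to the codeword
`(Tr(u x + v y))_{(x,y) ∈ D_{(a,b)}}`; its range is the code `C_{D_{(a,b)}}`. -/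
def cmap (l m : ℕ) {F : Type*} [Field F] [Fintype F] [Algebra (ZMod 2) F] (a b : F) :
    (F × F) →ₗ[ZMod 2] (↥(Dset l m a b) → ZMod 2) :=
  LinearMap.pi fun d =>
    (Algebra.trace (ZMod 2) F).comp
      ((LinearMap.mulLeft (ZMod 2) (d : F × F).1).comp (LinearMap.fst (ZMod 2) F F) +
       (LinearMap.mulLeft (ZMod 2) (d : F × F).2).comp (LinearMap.snd (ZMod 2) F F))

/-- Hamming weight of a word indexed by `ι`. -/
def hwt {ι : Type*} (c : ι → ZMod 2) : ℕ := {i | c i ≠ 0}.ncard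

/-- Hamming weight of the codeword `c_{(u,v)}` of `C_{D_{(a,b)}}`. -/
def cwt (l m : ℕ) {F : Type*} [Field F] [Fintype F] [Algebra (ZMod 2) F] (a b u v : F) : ℕ :=
  {p : F × F | p ∈ Dset l m a b ∧ Algebra.trace (ZMod 2) F (u * p.1 + v * p.2) ≠ 0}.ncard

/-- The `r`-th generalized Hamming weight of a linear code `C ⊆ F_p^ι`:
the minimum support size of an `r`-dimensional subspace of `C`. -/
def GHW (p : ℕ) {ι : Type*} (C : Submodule (ZMod p) (ι → ZMod p)) (r : ℕ) : ℕ :=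
  sInf {n | ∃ V : Submodule (ZMod p) (ι → ZMod p), V ≤ C ∧
    Module.finrank (ZMod p) ↥V = r ∧ {i : ι | ∃ c ∈ V, c i ≠ 0}.ncard = n}

/-- The Hamming weight `wt(u^{(i)})` of the sub-vector
`u^{(i)} = (a_{l^{m-1}-i}, a_{2 l^{m-1}-i}, …, a_{(l-1) l^{m-1}-i})` of the coordinate
vector of `u` in the basis `{α, α², …, α^{φ(l^m)}}` (the basis `B`, indexed so that
`B j = α^{j+1}`). -/
def wtCoord (l m : ℕ) {F : Type*} [Field F] [Fintype F] [Algebra (ZMod 2) F]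
    (B : Module.Basis (Fin (Nat.totient (l ^ m))) (ZMod 2) F) (i : ℕ) (u : F) : ℕ :=
  {k : ℕ | k < l - 1 ∧ ∃ h : (k + 1) * l ^ (m - 1) - i - 1 < Nat.totient (l ^ m),
      B.repr u ⟨(k + 1) * l ^ (m - 1) - i - 1, h⟩ = 1}.ncard

/-- The exponential sum `B_{H_r} = Σ_{(x,y) ∈ F_q²} Σ_{β ∈ H_r}
(-1)^{Tr(β·(x,y) + a x^{(q-1)/l^m} + b y)}`. -/
def BH (l m : ℕ) {F : Type*} [Field F] [Fintype F] [Algebra (ZMod 2) F] (a b : F)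
    (H : Submodule (ZMod 2) (F × F)) : ℤ :=
  letI : Fintype ↥H := Fintype.ofFinite ↥H
  ∑ p : F × F, ∑ β : ↥H,
    chi ((β : F × F).1 * p.1 + (β : F × F).2 * p.2
      + a * p.1 ^ ((Fintype.card F - 1) / l ^ m) + b * p.2)



section Helpers
variable {F : Type*} [Field F] [Fintype F] [Algebra (ZMod 2) F]

lemma chi_zero : chi (0 : F) = 1 := by simp [chi]

lemma chi_add (s t : F) : chi (s + t) = chi s * chi t := by
  have key : ∀ a b : ZMod 2, (if a + b = 0 then (1:ℤ) else -1) =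
      (if a = 0 then (1:ℤ) else -1) * (if b = 0 then (1:ℤ) else -1) := by decide
  unfold chi; rw [map_add]; exact key _ _

lemma exists_tr_one : ∃ y : F, Algebra.trace (ZMod 2) F y = 1 := by
  obtain ⟨y, hy⟩ := Algebra.trace_surjective (ZMod 2) F 1
  exact ⟨y, hy⟩

lemma sum_chi_mul {c : F} (hc : c ≠ 0) : ∑ y : F, chi (c * y) = 0 := by
  obtain ⟨y0, hy0⟩ := exists_tr_one (F := F)
  have key : ∑ y : F, chi (c * y) = ∑ y : F, chi (c * (y + c⁻¹ * y0)) :=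
    (Fintype.sum_equiv (Equiv.addRight (c⁻¹ * y0)) _ _ (fun y => rfl)).symm
  have h : ∀ y : F, chi (c * (y + c⁻¹ * y0)) = - chi (c * y) := by
    intro y
    rw [mul_add, mul_inv_cancel_left₀ hc, chi_add]
    have : chi y0 = -1 := by simp [chi, hy0]
    rw [this]; ring
  simp only [h, Finset.sum_neg_distrib] at key
  linarith

omit [Algebra (ZMod 2) F] in
/-- Sum over all of F equals value at 0 plus sum over units. -/
lemma sum_eq_zero_add_units (g : F → ℤ) :
    letI : Fintype Fˣ := Fintype.ofFinite Fˣ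
    ∑ x : F, g x = g 0 + ∑ x : Fˣ, g (x : F) := by
  classical
  letI : Fintype Fˣ := Fintype.ofFinite Fˣ
  rw [← Finset.add_sum_erase Finset.univ g (Finset.mem_univ (0:F))]
  congr 1
  have h1 : ∑ x ∈ Finset.univ.erase (0:F), g x = ∑ x : {x : F // x ≠ 0}, g x := by
    rw [← Finset.sum_subtype (Finset.univ.erase (0:F)) (fun x => by simp) g]
  rw [h1]
  exact Fintype.sum_equiv (unitsEquivNeZero (G₀ := F)).symm _ _ (fun x => rfl)

end Helpers

theorem stmt6 (l m : ℕ) (hl : l.Prime) (hm : 1 ≤ m)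
    {F : Type*} [Field F] [Fintype F] [Algebra (ZMod 2) F]
    (hcard : Fintype.card F = 2 ^ Nat.totient (l ^ m))
    (h2 : orderOf (2 : ZMod (l ^ m)) = Nat.totient (l ^ m))
    (a : F) (ha : a ≠ 0) (b : F) (hb : b ≠ 0) (u v : F) (huv : (u, v) ≠ (0, 0)) :
    (v ≠ b → (cwt l m a b u v : ℚ) = 1 / 4 * (Fintype.card F : ℚ) ^ 2) ∧
    (v = b →
      (cwt l m a b u v : ℚ) = 1 / 4 * (Fintype.card F : ℚ) * ((Fintype.card F : ℚ) - 1 - (Sab l m a u : ℚ))) := by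
  classical
  haveI : CharP F 2 := charP_of_injective_algebraMap (algebraMap (ZMod 2) F).injective 2
  set N := (Fintype.card F - 1) / l ^ m with hN
  have hlm0 : l ^ m ≠ 0 := pow_ne_zero _ hl.pos.ne'
  haveI : NeZero (l ^ m) := ⟨hlm0⟩
  have hdvd : l ^ m ∣ Fintype.card F - 1 := by
    have h1 : ((2 : ZMod (l ^ m))) ^ Nat.totient (l ^ m) = 1 := by
      rw [← h2]; exact pow_orderOf_eq_one _
    have h2' : ((2 ^ Nat.totient (l ^ m) - 1 : ℕ) : ZMod (l ^ m)) = 0 := by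
      push_cast [Nat.one_le_two_pow]
      rw [h1]; ring
    rw [hcard]
    exact (ZMod.natCast_eq_zero_iff _ _).mp h2'
  have hq1 : 1 < Fintype.card F := Fintype.one_lt_card
  have hNpos : N ≠ 0 := by
    have : l ^ m ≤ Fintype.card F - 1 := Nat.le_of_dvd (by omega) hdvd
    have := Nat.div_pos this (Nat.pos_of_ne_zero hlm0)
    omega
  set Tr := Algebra.trace (ZMod 2) F with hTr
  set f : F × F → F := fun p => a * p.1 ^ N + b * p.2 with hf
  set g : F × F → F := fun p => u * p.1 + v * p.2 with hg
  set P : F × F → Prop := fun p => Tr (f p) = 0 ∧ Tr (g p) ≠ 0 with hP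
  -- Step 1 : cwt = card of filter P
  have hcwt : (cwt l m a b u v : ℤ) = ((Finset.univ.filter P).card : ℤ) := by
    have hset : {p : F × F | p ∈ Dset l m a b ∧ Tr (u * p.1 + v * p.2) ≠ 0}
        = {p : F × F | P p} := by
      ext p
      simp only [Set.mem_setOf_eq, Dset, hP]
      constructor
      · rintro ⟨⟨-, h1⟩, h2⟩; exact ⟨h1, h2⟩
      · rintro ⟨h1, h2⟩
        refine ⟨⟨?_, h1⟩, h2⟩
        rintro rfl
        apply h2
        simp [hg]
    rw [cwt, hset]
    congr 1
    rw [Set.ncard_eq_toFinset_card' {p : F × F | P p}]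
    simp [Set.toFinset_setOf]
  -- Step 2 : pointwise character formula
  have hptw : ∀ p : F × F, (1 + chi (f p)) * (1 - chi (g p))
      = if P p then (4 : ℤ) else 0 := by
    intro p
    unfold chi
    by_cases h1 : Tr (f p) = 0 <;> by_cases h2 : Tr (g p) = 0 <;>
      simp [hP, h1, h2, ← hTr]
  have hsum4 : ∑ p : F × F, (1 + chi (f p)) * (1 - chi (g p))
      = 4 * (cwt l m a b u v : ℤ) := by
    rw [hcwt]
    simp only [hptw]
    rw [Finset.sum_ite, Finset.sum_const, Finset.sum_const_zero]
    simp [mul_comm]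
  -- Step 3 : expansion and vanishing sums
  have hT1 : ∑ p : F × F, chi (g p) = 0 := by
    rw [Fintype.sum_prod_type]
    simp only [hg, chi_add]
    rw [← Finset.sum_mul_sum]
    rcases eq_or_ne u 0 with hu | hu
    · have hv : v ≠ 0 := by
        rintro rfl; exact huv (by rw [hu])
      rw [sum_chi_mul hv, mul_zero]
    · rw [sum_chi_mul hu, zero_mul]
  have hT0 : ∑ p : F × F, chi (f p) = 0 := by
    rw [Fintype.sum_prod_type]
    simp only [hf, chi_add]
    rw [← Finset.sum_mul_sum, sum_chi_mul hb, mul_zero]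
  have hfg : ∀ p : F × F, f p + g p = (a * p.1 ^ N + u * p.1) + (b + v) * p.2 := by
    intro p; simp only [hf, hg]; ring
  have hexp : ∑ p : F × F, (1 + chi (f p)) * (1 - chi (g p))
      = (Fintype.card F : ℤ) ^ 2 + ∑ p : F × F, chi (f p) - ∑ p : F × F, chi (g p)
        - ∑ p : F × F, chi (f p + g p) := by
    have hpt : ∀ p : F × F, (1 + chi (f p)) * (1 - chi (g p))
        = 1 + chi (f p) - chi (g p) - chi (f p + g p) := by
      intro p; rw [chi_add (f p) (g p)]; ring
    simp only [hpt]
    rw [Finset.sum_sub_distrib, Finset.sum_sub_distrib, Finset.sum_add_distrib,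
      Finset.sum_const, Finset.card_univ, Fintype.card_prod]
    push_cast
    ring
  constructor
  · -- case v ≠ b
    intro hvb
    have hbv : b + v ≠ 0 := by
      intro h0
      rw [add_eq_zero_iff_eq_neg, CharTwo.neg_eq] at h0
      exact hvb h0.symm
    have hT2 : ∑ p : F × F, chi (f p + g p) = 0 := by
      simp only [hfg]
      rw [Fintype.sum_prod_type]
      simp only [chi_add]
      rw [← Finset.sum_mul_sum, sum_chi_mul hbv, mul_zero]
    have key : 4 * (cwt l m a b u v : ℤ) = (Fintype.card F : ℤ) ^ 2 := by
      rw [← hsum4, hexp, hT0, hT1, hT2]; ring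
    have key2 : (4 : ℚ) * (cwt l m a b u v : ℚ) = (Fintype.card F : ℚ) ^ 2 := by
      exact_mod_cast congrArg (fun z : ℤ => (z : ℚ)) key
    linear_combination key2 / 4
  · -- case v = b
    intro hvb
    have hbv : b + v = 0 := by rw [hvb, CharTwo.add_self_eq_zero]
    have hT2 : ∑ p : F × F, chi (f p + g p)
        = (Fintype.card F : ℤ) * (1 + Sab l m a u) := by
      simp only [hfg, hbv, zero_mul, add_zero]
      rw [Fintype.sum_prod_type]
      have hx : ∀ x : F, ∑ _y : F, chi (a * x ^ N + u * x)
          = (Fintype.card F : ℤ) * chi (a * x ^ N + u * x) := by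
        intro x; rw [Finset.sum_const, Finset.card_univ]; simp [mul_comm]
      simp only [hx]
      rw [← Finset.mul_sum]
      congr 1
      have hsplit := sum_eq_zero_add_units (F := F) (fun x => chi (a * x ^ N + u * x))
      rw [hsplit]
      have h0 : chi (a * (0:F) ^ N + u * 0) = 1 := by
        rw [zero_pow hNpos, mul_zero, mul_zero, add_zero, chi_zero]
      rw [h0]
      rfl
    have key : 4 * (cwt l m a b u v : ℤ)
        = (Fintype.card F : ℤ) ^ 2 - (Fintype.card F : ℤ) * (1 + Sab l m a u) := by
      rw [← hsum4, hexp, hT0, hT1, hT2]; ring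
    have key2 : (4 : ℚ) * (cwt l m a b u v : ℚ)
        = (Fintype.card F : ℚ) ^ 2 - (Fintype.card F : ℚ) * (1 + (Sab l m a u : ℚ)) := by
      exact_mod_cast congrArg (fun z : ℤ => (z : ℚ)) key
    linear_combination key2 / 4

end Paper
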